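/- arXiv:math/0703252 — 2 statements merged into one kernel-verified Lean document; each statement's English description precedes it below -/
import Mathlib

section
/- Let 0 < u₀ ≤ 1/2. Let ψ : [0,1] → ℝ be continuous piecewise affine, constant on [u₂, 1] for some u₂ < 1, and satisfying ψ(u) = u/u₀ − 1 for all u ∈ [0, u₀]. Define φ : [0,1] → ℝ by φ(u) = 0 for u ∈ [0, u₀] and φ(u) = ψ(u) for u ∈ [u₀, 1]. Then τ(φ) − τ(ψ) = −2/(1−u₀); consequently τ(ψ) − 4 ≤ τ(φ) < τ(ψ) − 2. -/
open MeasureTheory Set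

/-- `f : ℝ → ℝ` is *continuous piecewise affine* on `[0,1]`: it is continuous on `[0,1]`
and there is a finite partition `0 = t₀ < t₁ < ⋯ < t_m = 1` such that `f` is affine on
each subinterval `[t_{j}, t_{j+1}]`. -/
def CtsPiecewiseAffine (f : ℝ → ℝ) : Prop :=
  ContinuousOn f (Set.Icc (0:ℝ) 1) ∧
  ∃ (m : ℕ) (t : ℕ → ℝ), 0 < m ∧ t 0 = 0 ∧ t m = 1 ∧
    (∀ j < m, t j < t (j+1)) ∧
    (∀ j < m, ∃ a b : ℝ, ∀ x ∈ Set.Icc (t j) (t (j+1)), f x = a * x + b)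

/-- The *twist* of an edgepath-system function `f`:
`τ(f) = ∫₀¹ (2/(1−u)²)·f′(u) du`. -/
noncomputable def twist (f : ℝ → ℝ) : ℝ :=
  ∫ u in (0:ℝ)..1, (2/(1-u)^2) * deriv f u

/-- If `f` is affine on `[c,d]` then its derivative at interior points is the slope. -/
lemma deriv_affine_on {f : ℝ → ℝ} {a b c d u : ℝ}
    (h : ∀ x ∈ Set.Icc c d, f x = a * x + b) (hu : u ∈ Set.Ioo c d) :
    deriv f u = a := by
  have h1 : f =ᶠ[nhds u] (fun x => a * x + b) := by
    filter_upwards [Icc_mem_nhds hu.1 hu.2] with x hx using h x hx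
  rw [h1.deriv_eq]
  have : HasDerivAt (fun x => a * x + b) a u := by
    simpa using ((hasDerivAt_id u).const_mul a).add_const b
  exact this.deriv

/-- If two functions agree on an open interval, they agree a.e. with respect to
the restriction of Lebesgue measure to the corresponding `uIoc`. -/
lemma ae_mem_imp_of_Ioo {f g : ℝ → ℝ} {a b : ℝ} (hab : a ≤ b)
    (h : ∀ x ∈ Set.Ioo a b, f x = g x) :
    ∀ᵐ x ∂(volume : Measure ℝ), x ∈ Set.uIoc a b → f x = g x := by
  have hb : ∀ᵐ x ∂(volume : Measure ℝ), x ≠ b := by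
    rw [MeasureTheory.ae_iff]
    have : {x : ℝ | ¬ x ≠ b} = {b} := by ext x; simp
    rw [this]
    exact measure_singleton b
  filter_upwards [hb] with x hx hmem
  rw [Set.uIoc_of_le hab] at hmem
  exact h x ⟨hmem.1, lt_of_le_of_ne hmem.2 hx⟩

lemma ae_restrict_of_Ioo {f g : ℝ → ℝ} {a b : ℝ} (hab : a ≤ b)
    (h : ∀ x ∈ Set.Ioo a b, f x = g x) :
    f =ᵐ[volume.restrict (Set.uIoc a b)] g :=
  (ae_restrict_iff' measurableSet_uIoc).2 (ae_mem_imp_of_Ioo hab h)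

/-- Interval integrability transfer along equality on the open interval. -/
lemma intervalIntegrable_congr_Ioo {f g : ℝ → ℝ} {a b : ℝ} (hab : a ≤ b)
    (h : ∀ x ∈ Set.Ioo a b, f x = g x)
    (hf : IntervalIntegrable f volume a b) : IntervalIntegrable g volume a b := by
  rw [intervalIntegrable_iff] at hf ⊢
  exact hf.congr (ae_restrict_of_Ioo hab h)

lemma integral_congr_Ioo {f g : ℝ → ℝ} {a b : ℝ} (hab : a ≤ b)
    (h : ∀ x ∈ Set.Ioo a b, f x = g x) :
    ∫ u in a..b, f u = ∫ u in a..b, g u :=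
  intervalIntegral.integral_congr_ae (ae_mem_imp_of_Ioo hab h)

/-- (Function-level form of Lemma 3.3(2)(a1).) Let `0 < u₀ ≤ 1/2`, and let `ψ` be
continuous piecewise affine on `[0,1]`, constant on `[u₂,1]` for some `u₂ < 1`, with
`ψ(u) = u/u₀ − 1` on `[0,u₀]`. Let `φ` be `0` on `[0,u₀]` and equal to `ψ` on `[u₀,1]`.
Then `τ(φ) − τ(ψ) = −2/(1−u₀)`; consequently `τ(ψ) − 4 ≤ τ(φ) < τ(ψ) − 2`. -/
theorem stmt3 (u₀ : ℝ) (hu₀pos : 0 < u₀) (hu₀le : u₀ ≤ 1/2)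
    (ψ : ℝ → ℝ) (hψ : CtsPiecewiseAffine ψ)
    (u₂ : ℝ) (hu₂ : u₂ < 1)
    (hc : ∃ c : ℝ, ∀ u ∈ Set.Icc u₂ (1:ℝ), ψ u = c)
    (hψform : ∀ u ∈ Set.Icc (0:ℝ) u₀, ψ u = u/u₀ - 1)
    (φ : ℝ → ℝ)
    (hφ0 : ∀ u ∈ Set.Icc (0:ℝ) u₀, φ u = 0)
    (hφψ : ∀ u ∈ Set.Icc u₀ (1:ℝ), φ u = ψ u) :
    twist φ - twist ψ = -2/(1-u₀) ∧
    twist ψ - 4 ≤ twist φ ∧ twist φ < twist ψ - 2 := by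
  obtain ⟨c, hcconst⟩ := hc
  obtain ⟨hcont, m, t, hm, ht0, htm, hinc, haff⟩ := hψ
  set g : ℝ → ℝ := fun u => 2/(1-u)^2 with hg
  set w : ℝ := max u₂ u₀ with hwdef
  have hu₀1 : u₀ < 1 := lt_of_le_of_lt hu₀le (by norm_num)
  have hw1 : w < 1 := max_lt hu₂ hu₀1
  have hu₀w : u₀ ≤ w := le_max_right _ _
  have hwpos : 0 < w := lt_of_lt_of_le hu₀pos hu₀w
  -- derivative facts
  have hderivψ0 : ∀ u ∈ Set.Ioo (0:ℝ) u₀, deriv ψ u = 1/u₀ := by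
    intro u hu
    refine deriv_affine_on (a := 1/u₀) (b := -1) (c := 0) (d := u₀) ?_ hu
    intro x hx
    rw [hψform x hx]; ring
  have hderivψw : ∀ u ∈ Set.Ioo w (1:ℝ), deriv ψ u = 0 := by
    intro u hu
    refine deriv_affine_on (a := 0) (b := c) (c := w) (d := 1) ?_ hu
    intro x hx
    rw [hcconst x ⟨le_trans (le_max_left _ _) hx.1, hx.2⟩]; ring
  have hderivφ0 : ∀ u ∈ Set.Ioo (0:ℝ) u₀, deriv φ u = 0 := by
    intro u hu
    refine deriv_affine_on (a := 0) (b := 0) (c := 0) (d := u₀) ?_ hu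
    intro x hx
    rw [hφ0 x hx]; ring
  have hderivφψ : ∀ u ∈ Set.Ioo u₀ (1:ℝ), deriv φ u = deriv ψ u := by
    intro u hu
    have h1 : φ =ᶠ[nhds u] ψ := by
      filter_upwards [Icc_mem_nhds hu.1 hu.2] with x hx using hφψ x hx
    exact h1.deriv_eq
  -- integrability of g * ψ' on [0, w] by induction over the partition
  have hInt : ∀ j, j ≤ m → IntervalIntegrable (fun u => g u * deriv ψ u) volume 0 (min (t j) w) := by
    intro j
    induction j with
    | zero =>
      intro _
      rw [ht0, min_eq_left hwpos.le]
    | succ j ih =>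
      intro hj
      have hjm : j < m := hj
      have h1 := ih (le_of_lt hjm)
      refine h1.trans ?_
      by_cases hcase : w ≤ t j
      · have e1 : min (t j) w = w := min_eq_right hcase
        have e2 : min (t (j+1)) w = w := min_eq_right (hcase.trans (hinc j hjm).le)
        rw [e1, e2]
      · push_neg at hcase
        obtain ⟨a, b, hab⟩ := haff j hjm
        have e1 : min (t j) w = t j := min_eq_left hcase.le
        rw [e1]
        set d := min (t (j+1)) w with hd
        have htjd : t j ≤ d := le_min (hinc j hjm).le hcase.le
        have hd1 : d < 1 := lt_of_le_of_lt (min_le_right _ _) hw1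
        have hcontg : IntervalIntegrable (fun u => g u * a) volume (t j) d := by
          apply ContinuousOn.intervalIntegrable
          apply ContinuousOn.mul _ continuousOn_const
          apply ContinuousOn.div continuousOn_const (by fun_prop)
          intro x hx
          rw [Set.uIcc_of_le htjd] at hx
          have hx1 : x < 1 := lt_of_le_of_lt hx.2 hd1
          exact pow_ne_zero 2 (ne_of_gt (by linarith : (0:ℝ) < 1 - x))
        refine intervalIntegrable_congr_Ioo htjd ?_ hcontg
        intro x hx
        have hx' : x ∈ Set.Ioo (t j) (t (j+1)) :=
          ⟨hx.1, lt_of_lt_of_le hx.2 (min_le_left _ _)⟩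
        rw [deriv_affine_on hab hx']
  have hIntw : IntervalIntegrable (fun u => g u * deriv ψ u) volume 0 w := by
    have := hInt m le_rfl
    rwa [htm, min_eq_right hw1.le] at this
  -- integrability on the pieces
  have hIψ₁ : IntervalIntegrable (fun u => g u * deriv ψ u) volume 0 u₀ := by
    refine hIntw.mono_set ?_
    rw [Set.uIcc_of_le hu₀pos.le, Set.uIcc_of_le hwpos.le]
    exact Set.Icc_subset_Icc le_rfl hu₀w
  have hIψ₂ : IntervalIntegrable (fun u => g u * deriv ψ u) volume u₀ w := by
    refine hIntw.mono_set ?_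
    rw [Set.uIcc_of_le hu₀w, Set.uIcc_of_le hwpos.le]
    exact Set.Icc_subset_Icc hu₀pos.le le_rfl
  have hIψ₃ : IntervalIntegrable (fun u => g u * deriv ψ u) volume w 1 := by
    refine intervalIntegrable_congr_Ioo hw1.le (f := fun _ => (0:ℝ)) ?_ intervalIntegrable_const
    intro x hx
    rw [hderivψw x hx]; ring
  have hIφ₁ : IntervalIntegrable (fun u => g u * deriv φ u) volume 0 u₀ := by
    refine intervalIntegrable_congr_Ioo hu₀pos.le (f := fun _ => (0:ℝ)) ?_ intervalIntegrable_const
    intro x hx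
    rw [hderivφ0 x hx]; ring
  have hIφ₂ : IntervalIntegrable (fun u => g u * deriv φ u) volume u₀ w := by
    refine intervalIntegrable_congr_Ioo hu₀w ?_ hIψ₂
    intro x hx
    rw [hderivφψ x ⟨hx.1, lt_of_lt_of_le hx.2 hw1.le⟩]
  have hIφ₃ : IntervalIntegrable (fun u => g u * deriv φ u) volume w 1 := by
    refine intervalIntegrable_congr_Ioo hw1.le (f := fun _ => (0:ℝ)) ?_ intervalIntegrable_const
    intro x hx
    have := hderivφψ x ⟨lt_of_le_of_lt hu₀w hx.1, hx.2⟩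
    rw [this, hderivψw x hx]; ring
  -- integral values on the pieces
  have hJψ : ∫ u in (0:ℝ)..u₀, g u * deriv ψ u = 2/(1-u₀) := by
    have e1 : ∫ u in (0:ℝ)..u₀, g u * deriv ψ u
        = ∫ u in (0:ℝ)..u₀, (2/u₀) * (1/(1-u)^2) := by
      refine integral_congr_Ioo hu₀pos.le ?_
      intro x hx
      rw [hderivψ0 x hx, hg]
      field_simp
    rw [e1]
    have hFT : ∀ u ∈ Set.uIcc (0:ℝ) u₀,
        HasDerivAt (fun x => (2/u₀) * (1-x)⁻¹) ((2/u₀) * (1/(1-u)^2)) u := by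
      intro u hu
      rw [Set.uIcc_of_le hu₀pos.le] at hu
      have hne : 1 - u ≠ 0 := by
        have : u < 1 := lt_of_le_of_lt hu.2 hu₀1
        intro h; linarith [this]
      have h0 : HasDerivAt (fun x : ℝ => 1 - x) (-1) u := (hasDerivAt_id u).const_sub 1
      have h1 := (h0.inv hne).const_mul (2/u₀)
      refine h1.congr_deriv ?_
      ring
    have hintcont : IntervalIntegrable (fun u => (2/u₀) * (1/(1-u)^2)) volume 0 u₀ := by
      apply ContinuousOn.intervalIntegrable
      apply ContinuousOn.mul continuousOn_const
      apply ContinuousOn.div continuousOn_const (by fun_prop)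
      intro x hx
      rw [Set.uIcc_of_le hu₀pos.le] at hx
      have hx1 : x < 1 := lt_of_le_of_lt hx.2 hu₀1
      exact pow_ne_zero 2 (ne_of_gt (by linarith : (0:ℝ) < 1 - x))
    rw [intervalIntegral.integral_eq_sub_of_hasDerivAt hFT hintcont]
    have h10 : (1:ℝ) - u₀ ≠ 0 := by intro h; linarith
    field_simp
    ring
  have hJφ : ∫ u in (0:ℝ)..u₀, g u * deriv φ u = 0 := by
    rw [integral_congr_Ioo hu₀pos.le (g := fun _ => (0:ℝ))
      (fun x hx => by rw [hderivφ0 x hx]; ring)]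
    simp
  have hmid : ∫ u in u₀..w, g u * deriv φ u = ∫ u in u₀..w, g u * deriv ψ u := by
    refine integral_congr_Ioo hu₀w ?_
    intro x hx
    rw [hderivφψ x ⟨hx.1, lt_of_lt_of_le hx.2 hw1.le⟩]
  have hlastψ : ∫ u in w..(1:ℝ), g u * deriv ψ u = 0 := by
    rw [integral_congr_Ioo hw1.le (g := fun _ => (0:ℝ))
      (fun x hx => by rw [hderivψw x hx]; ring)]
    simp
  have hlastφ : ∫ u in w..(1:ℝ), g u * deriv φ u = 0 := by
    rw [integral_congr_Ioo hw1.le (g := fun _ => (0:ℝ)) ?_]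
    · simp
    · intro x hx
      rw [hderivφψ x ⟨lt_of_le_of_lt hu₀w hx.1, hx.2⟩, hderivψw x hx]; ring
  -- assemble the twists
  have hsplitψ : twist ψ = (∫ u in (0:ℝ)..u₀, g u * deriv ψ u)
      + ((∫ u in u₀..w, g u * deriv ψ u) + ∫ u in w..(1:ℝ), g u * deriv ψ u) := by
    rw [twist, intervalIntegral.integral_add_adjacent_intervals hIψ₂ hIψ₃,
      intervalIntegral.integral_add_adjacent_intervals hIψ₁ (hIψ₂.trans hIψ₃)]
  have hsplitφ : twist φ = (∫ u in (0:ℝ)..u₀, g u * deriv φ u)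
      + ((∫ u in u₀..w, g u * deriv φ u) + ∫ u in w..(1:ℝ), g u * deriv φ u) := by
    rw [twist, intervalIntegral.integral_add_adjacent_intervals hIφ₂ hIφ₃,
      intervalIntegral.integral_add_adjacent_intervals hIφ₁ (hIφ₂.trans hIφ₃)]
  have hkey : twist φ - twist ψ = -2/(1-u₀) := by
    rw [hsplitψ, hsplitφ, hJψ, hJφ, hmid, hlastψ, hlastφ]
    ring
  refine ⟨hkey, ?_, ?_⟩
  · have h1 : (0:ℝ) < 1 - u₀ := by linarith
    have h2 : 2/(1-u₀) ≤ 4 := by rw [div_le_iff₀ h1]; linarith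
    have : twist φ = twist ψ + (-2/(1-u₀)) := by linarith [hkey]
    rw [this, neg_div]
    linarith
  · have h1 : (0:ℝ) < 1 - u₀ := by linarith
    have h3 : 2 < 2/(1-u₀) := by rw [lt_div_iff₀ h1]; nlinarith
    have : twist φ = twist ψ + (-2/(1-u₀)) := by linarith [hkey]
    rw [this, neg_div]
    linarith
end

section
/- Let ψ : [0,1] → ℝ be continuous piecewise affine, constant on [u₂, 1] for some u₂ < 1, affine on [0, 1/2], with ψ(0) = −1 and ψ(1/2) < 0. Let φ : [0,1] → ℝ be continuous piecewise affine such that: φ = 0 on [0, u₀] for some u₀ ∈ (0,1); φ(u) ≥ ψ(u) for all u ∈ [0,1]; φ = ψ on [u₁, 1] for some u₁ < 1; and, in case u₀ < 1/2, φ is affine on [u₀, 1/2]. Then τ(φ) ≤ τ(ψ) − 4. -/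
open MeasureTheory Set

lemma hasDerivAt_G (a b c : ℝ) {x : ℝ} (hx : x ≠ 1) :
    HasDerivAt (fun u => 2/(1-u)^2 * (a*u+b-c))
      (2/(1-x)^2 * a + 4/(1-x)^3 * (a*x+b-c)) x := by
  have h1 : (1-x) ≠ 0 := sub_ne_zero.mpr (Ne.symm hx)
  have hnum : HasDerivAt (fun u : ℝ => 2*(a*u+b-c)) (2*a) x := by
    have h := ((hasDerivAt_id x).const_mul (2*a)).add_const (2*(b-c))
    exact (by simpa using h : HasDerivAt (fun u : ℝ => 2*a*u + 2*(b-c)) (2*a) x).congr_of_eventuallyEq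
      (Filter.Eventually.of_forall fun y => by ring)
  have hden : HasDerivAt (fun u : ℝ => (1-u)^2) (2*(1-x)^1*(-1)) x := by
    have h := ((hasDerivAt_id x).const_sub 1).fun_pow 2
    simpa using h
  have h := hnum.fun_div hden (pow_ne_zero 2 h1)
  have heq : (fun u : ℝ => 2*(a*u+b-c)/(1-u)^2) = (fun u : ℝ => 2/(1-u)^2 * (a*u+b-c)) := by
    funext u; ring
  rw [heq] at h
  refine h.congr_deriv ?_
  field_simp
  ring

-- a.e. equality on uIoc from equality on Ioo
lemma ae_uIoc_of_Ioo {f g : ℝ → ℝ} {p q : ℝ} (hpq : p ≤ q)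
    (h : ∀ x ∈ Ioo p q, f x = g x) :
    ∀ᵐ x ∂(volume : Measure ℝ), x ∈ Set.uIoc p q → f x = g x := by
  have hq : ({q} : Set ℝ)ᶜ ∈ ae (volume : Measure ℝ) :=
    compl_mem_ae_iff.mpr (measure_singleton q)
  filter_upwards [hq] with x hx hmem
  rw [uIoc_of_le hpq] at hmem
  exact h x ⟨hmem.1, lt_of_le_of_ne hmem.2 hx⟩

lemma ae_restrict_of_Ioo_s5 {f g : ℝ → ℝ} {p q : ℝ} (hpq : p ≤ q)
    (h : ∀ x ∈ Ioo p q, f x = g x) :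
    f =ᵐ[(volume : Measure ℝ).restrict (Set.uIoc p q)] g :=
  (ae_restrict_iff' measurableSet_uIoc).mpr (ae_uIoc_of_Ioo hpq h)

lemma piece (f : ℝ → ℝ) (c p q a b : ℝ) (hpq : p < q) (hq : q ≤ 1)
    (haff : ∀ x ∈ Icc p q, f x = a * x + b)
    (hlast : q = 1 → ∀ x ∈ Icc p q, f x = c) :
    IntervalIntegrable (fun u => (2/(1-u)^2) * deriv f u) volume p q ∧
    IntervalIntegrable (fun u => (4/(1-u)^3) * (f u - c)) volume p q ∧
    (∫ u in p..q, (2/(1-u)^2) * deriv f u) + (∫ u in p..q, (4/(1-u)^3) * (f u - c))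
      = (2/(1-q)^2) * (f q - c) - (2/(1-p)^2) * (f p - c) := by
  rcases eq_or_lt_of_le hq with hq1 | hq1
  · -- q = 1 : f is constant c on [p,q]
    have hfc : ∀ x ∈ Icc p q, f x = c := hlast hq1.symm.symm
    have hderiv0 : ∀ x ∈ Ioo p q, (2/(1-x)^2) * deriv f x = (0:ℝ) := by
      intro x hx
      have hmem : Icc p q ∈ nhds x := Icc_mem_nhds hx.1 hx.2
      have : HasDerivAt f 0 x :=
        (hasDerivAt_const x c).congr_of_eventuallyEq
          (Filter.eventuallyEq_of_mem hmem hfc)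
      rw [this.deriv]; ring
    have h2pt : ∀ x ∈ Icc p q, (4/(1-x)^3) * (f x - c) = (0:ℝ) := by
      intro x hx; rw [hfc x hx]; ring
    have hI1 : IntervalIntegrable (fun u => (2/(1-u)^2) * deriv f u) volume p q :=
      (intervalIntegrable_const (c := (0:ℝ))).congr_ae
        ((ae_restrict_of_Ioo_s5 hpq.le hderiv0).symm)
    have hI2 : IntervalIntegrable (fun u => (4/(1-u)^3) * (f u - c)) volume p q :=
      (intervalIntegrable_const (c := (0:ℝ))).congr_ae
        ((ae_restrict_of_Ioo_s5 hpq.le (fun x hx => h2pt x ⟨hx.1.le, hx.2.le⟩)).symm)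
    refine ⟨hI1, hI2, ?_⟩
    have e1 : (∫ u in p..q, (2/(1-u)^2) * deriv f u) = 0 :=
      intervalIntegral.integral_zero_ae (ae_uIoc_of_Ioo hpq.le hderiv0)
    have e2 : (∫ u in p..q, (4/(1-u)^3) * (f u - c)) = 0 :=
      intervalIntegral.integral_zero_ae
        (ae_uIoc_of_Ioo hpq.le (fun x hx => h2pt x ⟨hx.1.le, hx.2.le⟩))
    rw [e1, e2, hfc q ⟨hpq.le, le_refl q⟩, hfc p ⟨le_refl p, hpq.le⟩]
    ring
  · -- q < 1
    have hne : ∀ x ∈ Icc p q, (1:ℝ) - x ≠ 0 := by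
      intro x hx
      have : x < 1 := lt_of_le_of_lt hx.2 hq1
      intro h; nlinarith
    have hcont1 : ContinuousOn (fun u : ℝ => 2/(1-u)^2 * a) (Icc p q) := by
      apply ContinuousOn.mul _ continuousOn_const
      apply ContinuousOn.div continuousOn_const (by fun_prop)
      intro x hx; exact pow_ne_zero 2 (hne x hx)
    have hcont2 : ContinuousOn (fun u : ℝ => 4/(1-u)^3 * (a*u+b-c)) (Icc p q) := by
      apply ContinuousOn.mul _ (by fun_prop)
      apply ContinuousOn.div continuousOn_const (by fun_prop)
      intro x hx; exact pow_ne_zero 3 (hne x hx)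
    have huIcc : uIcc p q = Icc p q := uIcc_of_le hpq.le
    have hInt1' : IntervalIntegrable (fun u : ℝ => 2/(1-u)^2 * a) volume p q :=
      (huIcc ▸ hcont1).intervalIntegrable
    have hInt2' : IntervalIntegrable (fun u : ℝ => 4/(1-u)^3 * (a*u+b-c)) volume p q :=
      (huIcc ▸ hcont2).intervalIntegrable
    have hd1 : ∀ x ∈ Ioo p q, (fun u : ℝ => 2/(1-u)^2 * a) x = (2/(1-x)^2) * deriv f x := by
      intro x hx
      have hmem : Icc p q ∈ nhds x := Icc_mem_nhds hx.1 hx.2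
      have haf : HasDerivAt (fun u : ℝ => a*u+b) a x := by
        have h := ((hasDerivAt_id x).const_mul a).add_const b
        simpa using h
      have : HasDerivAt f a x :=
        haf.congr_of_eventuallyEq (Filter.eventuallyEq_of_mem hmem haff)
      rw [this.deriv]
    have hd2 : ∀ x ∈ Icc p q, (4/(1-x)^3) * (f x - c) = (fun u : ℝ => 4/(1-u)^3 * (a*u+b-c)) x := by
      intro x hx; rw [haff x hx]
    have hI1 : IntervalIntegrable (fun u => (2/(1-u)^2) * deriv f u) volume p q :=
      hInt1'.congr_ae (ae_restrict_of_Ioo_s5 hpq.le hd1)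
    have hI2 : IntervalIntegrable (fun u => (4/(1-u)^3) * (f u - c)) volume p q :=
      hInt2'.congr_ae ((ae_restrict_of_Ioo_s5 hpq.le
        (fun x hx => (hd2 x ⟨hx.1.le, hx.2.le⟩).symm)))
    refine ⟨hI1, hI2, ?_⟩
    have e1 : (∫ u in p..q, (2/(1-u)^2) * deriv f u) = ∫ u in p..q, 2/(1-u)^2 * a :=
      intervalIntegral.integral_congr_ae
        ((ae_uIoc_of_Ioo hpq.le hd1).mono (fun x h hx => (h hx).symm))
    have e2 : (∫ u in p..q, (4/(1-u)^3) * (f u - c)) = ∫ u in p..q, 4/(1-u)^3 * (a*u+b-c) :=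
      intervalIntegral.integral_congr (huIcc ▸ hd2)
    have hFTC : ∀ x ∈ uIcc p q, HasDerivAt (fun u : ℝ => 2/(1-u)^2 * (a*u+b-c))
        ((fun u : ℝ => 2/(1-u)^2 * a + 4/(1-u)^3 * (a*u+b-c)) x) x := by
      intro x hx
      rw [huIcc] at hx
      exact hasDerivAt_G a b c (fun h => hne x hx (by rw [h]; ring))
    have hIntsum : IntervalIntegrable
        (fun u : ℝ => 2/(1-u)^2 * a + 4/(1-u)^3 * (a*u+b-c)) volume p q :=
      hInt1'.add hInt2'
    have hsub := intervalIntegral.integral_eq_sub_of_hasDerivAt hFTC hIntsum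
    have hadd := intervalIntegral.integral_add hInt1' hInt2'
    rw [e1, e2, ← hadd, hsub, haff q ⟨hpq.le, le_refl q⟩, haff p ⟨le_refl p, hpq.le⟩]

lemma lemA (f : ℝ → ℝ) (hf : CtsPiecewiseAffine f) (s : ℝ) (hs0 : 0 ≤ s) (hs1 : s < 1)
    (c : ℝ) (hc : ∀ u ∈ Icc s 1, f u = c) :
    IntervalIntegrable (fun u => (4/(1-u)^3) * (f u - c)) volume 0 1 ∧
    twist f + (∫ u in (0:ℝ)..1, (4/(1-u)^3) * (f u - c)) = -2 * (f 0 - c) := by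
  obtain ⟨-, m, t, hm, ht0, htm, hlt, haffs⟩ := hf
  -- monotonicity
  have hmono : ∀ k ≤ m, ∀ j ≤ k, t j ≤ t k := by
    intro k
    induction k with
    | zero => intro _ j hj; interval_cases j; exact le_refl _
    | succ k ih =>
      intro hk j hj
      rcases Nat.eq_or_lt_of_le hj with h | h
      · rw [h]
      · exact le_trans (ih (le_of_lt (Nat.lt_of_lt_of_le (Nat.lt_succ_self k) hk))
          j (Nat.lt_succ_iff.mp h)) (hlt k (Nat.lt_of_lt_of_le (Nat.lt_succ_self k) hk)).le
  have hub : ∀ j ≤ m, t j ≤ 1 := fun j hj => htm ▸ hmono m (le_refl m) j hj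
  have hlb : ∀ j ≤ m, 0 ≤ t j := fun j hj => ht0 ▸ hmono j hj 0 (Nat.zero_le j)
  -- per-piece data
  have hpieces : ∀ j < m,
      IntervalIntegrable (fun u => (2/(1-u)^2) * deriv f u) volume (t j) (t (j+1)) ∧
      IntervalIntegrable (fun u => (4/(1-u)^3) * (f u - c)) volume (t j) (t (j+1)) ∧
      (∫ u in (t j)..(t (j+1)), (2/(1-u)^2) * deriv f u)
        + (∫ u in (t j)..(t (j+1)), (4/(1-u)^3) * (f u - c))
      = (2/(1-(t (j+1)))^2) * (f (t (j+1)) - c) - (2/(1-(t j))^2) * (f (t j) - c) := by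
    intro j hj
    obtain ⟨a, b, hab⟩ := haffs j hj
    apply piece f c (t j) (t (j+1)) a b (hlt j hj) (hub (j+1) hj)
    · exact hab
    · -- last piece: f constant c
      intro hq1 x hx
      have htj1 : t j < 1 := hq1 ▸ hlt j hj
      set s' := max s (t j) with hs'
      have hs'1 : s' < 1 := max_lt hs1 htj1
      have e1 : a * s' + b = c := by
        rw [← hab s' ⟨le_max_right _ _, by rw [hq1]; exact hs'1.le⟩]
        exact hc s' ⟨le_max_left _ _, hs'1.le⟩
      have e2 : a * 1 + b = c := by
        rw [← hab 1 ⟨htj1.le, by rw [hq1]⟩]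
        exact hc 1 ⟨hs1.le, le_refl _⟩
      have ha : a = 0 := by
        have h3 : a * (s' - 1) = 0 := by linarith [e1, e2]
        rcases mul_eq_zero.mp h3 with h | h
        · exact h
        · exact absurd (by linarith : s' = 1) hs'1.ne
      have hb : b = c := by rw [ha] at e2; linarith
      rw [hab x hx, ha, hb]; ring
  have hint1 : ∀ j < m, IntervalIntegrable (fun u => (2/(1-u)^2) * deriv f u)
      volume (t j) (t (j+1)) := fun j hj => (hpieces j hj).1
  have hint2 : ∀ j < m, IntervalIntegrable (fun u => (4/(1-u)^3) * (f u - c))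
      volume (t j) (t (j+1)) := fun j hj => (hpieces j hj).2.1
  have hsum1 := intervalIntegral.sum_integral_adjacent_intervals hint1
  have hsum2 := intervalIntegral.sum_integral_adjacent_intervals hint2
  rw [ht0, htm] at hsum1 hsum2
  have hII : IntervalIntegrable (fun u => (4/(1-u)^3) * (f u - c)) volume 0 1 := by
    have := IntervalIntegrable.trans_iterate hint2
    rwa [ht0, htm] at this
  refine ⟨hII, ?_⟩
  have key : (∑ j ∈ Finset.range m, ((∫ u in (t j)..(t (j+1)), (2/(1-u)^2) * deriv f u)
      + (∫ u in (t j)..(t (j+1)), (4/(1-u)^3) * (f u - c))))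
      = (2/(1-(t m))^2) * (f (t m) - c) - (2/(1-(t 0))^2) * (f (t 0) - c) := by
    rw [Finset.sum_congr rfl (fun j hj => (hpieces j (Finset.mem_range.mp hj)).2.2)]
    exact Finset.sum_range_sub (fun j => (2/(1-(t j))^2) * (f (t j) - c)) m
  rw [Finset.sum_add_distrib, hsum1, hsum2] at key
  rw [ht0, htm] at key
  have hf1 : f 1 = c := hc 1 ⟨hs1.le, le_refl _⟩
  rw [hf1] at key
  unfold twist
  rw [key]
  norm_num

lemma computeC : (∫ u in (0:ℝ)..(1/2:ℝ), (4/(1-u)^3) * (1-2*u)) = 2 := by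
  have hd : ∀ x ∈ uIcc (0:ℝ) (1/2:ℝ), HasDerivAt (fun u : ℝ => (6-8*u)/(1-u)^2)
      ((4/(1-x)^3) * (1-2*x)) x := by
    intro x hx
    rw [uIcc_of_le (by norm_num)] at hx
    have h1 : (1-x) ≠ 0 := by
      have := hx.2; intro h; nlinarith [hx.1, hx.2]
    have hnum : HasDerivAt (fun u : ℝ => 6-8*u) (-8) x := by
      have h := ((hasDerivAt_id x).const_mul (8:ℝ)).const_sub 6
      simpa using h
    have hden : HasDerivAt (fun u : ℝ => (1-u)^2) (2*(1-x)^1*(-1)) x := by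
      have h := ((hasDerivAt_id x).const_sub 1).fun_pow 2
      simpa using h
    have h := hnum.fun_div hden (pow_ne_zero 2 h1)
    refine h.congr_deriv ?_
    field_simp
    ring
  have hint : IntervalIntegrable (fun u : ℝ => (4/(1-u)^3) * (1-2*u)) volume 0 (1/2) := by
    apply ContinuousOn.intervalIntegrable
    apply ContinuousOn.mul
    · apply ContinuousOn.div continuousOn_const (by fun_prop)
      intro x hx
      rw [uIcc_of_le (by norm_num)] at hx
      have : (1:ℝ)-x ≠ 0 := by intro h; nlinarith [hx.1, hx.2]
      positivity
    · fun_prop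
  have := intervalIntegral.integral_eq_sub_of_hasDerivAt hd hint
  rw [this]
  norm_num

/-- (Function-level form of Lemma 3.3(2)(b).) Let `ψ` be continuous piecewise affine on
`[0,1]`, constant on `[u₂,1]` for some `u₂ < 1`, affine on `[0,1/2]`, with `ψ(0) = −1`
and `ψ(1/2) < 0`. Let `φ` be continuous piecewise affine such that `φ = 0` on `[0,u₀]`
for some `u₀ ∈ (0,1)`, `φ ≥ ψ` on `[0,1]`, `φ = ψ` on `[u₁,1]` for some `u₁ < 1`, and,
in case `u₀ < 1/2`, `φ` is affine on `[u₀,1/2]`. Then `τ(φ) ≤ τ(ψ) − 4`. -/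
theorem stmt5 (ψ : ℝ → ℝ) (hψ : CtsPiecewiseAffine ψ)
    (u₂ : ℝ) (hu₂ : u₂ < 1)
    (hc : ∃ c : ℝ, ∀ u ∈ Set.Icc u₂ (1:ℝ), ψ u = c)
    (haffψ : ∃ a b : ℝ, ∀ x ∈ Set.Icc (0:ℝ) (1/2:ℝ), ψ x = a * x + b)
    (hψ0 : ψ 0 = -1) (hψhalf : ψ (1/2) < 0)
    (φ : ℝ → ℝ) (hφ : CtsPiecewiseAffine φ)
    (u₀ : ℝ) (hu₀pos : 0 < u₀) (hu₀lt : u₀ < 1)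
    (hφ0 : ∀ u ∈ Set.Icc (0:ℝ) u₀, φ u = 0)
    (hge : ∀ u ∈ Set.Icc (0:ℝ) 1, ψ u ≤ φ u)
    (u₁ : ℝ) (hu₁ : u₁ < 1)
    (heq : ∀ u ∈ Set.Icc u₁ (1:ℝ), φ u = ψ u)
    (haffφ : u₀ < 1/2 → ∃ a b : ℝ, ∀ x ∈ Set.Icc u₀ (1/2:ℝ), φ x = a * x + b) :
    twist φ ≤ twist ψ - 4 := by
  obtain ⟨c, hcψ⟩ := hc
  set s : ℝ := max (max u₁ u₂) 0 with hs
  have hs0 : (0:ℝ) ≤ s := le_max_right _ _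
  have hs1 : s < 1 := max_lt (max_lt hu₁ hu₂) one_pos
  have hcψ' : ∀ u ∈ Icc s 1, ψ u = c := fun u hu =>
    hcψ u ⟨le_trans (le_trans (le_max_right u₁ u₂) (le_max_left _ _)) hu.1, hu.2⟩
  have hcφ' : ∀ u ∈ Icc s 1, φ u = c := fun u hu => by
    rw [heq u ⟨le_trans (le_trans (le_max_left u₁ u₂) (le_max_left _ _)) hu.1, hu.2⟩]
    exact hcψ' u hu
  obtain ⟨Iψint, hψeq⟩ := lemA ψ hψ s hs0 hs1 c hcψ'
  obtain ⟨Iφint, hφeq⟩ := lemA φ hφ s hs0 hs1 c hcφ'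
  have hφ00 : φ 0 = 0 := hφ0 0 ⟨le_refl _, hu₀pos.le⟩
  -- pointwise key inequality on [0,1/2]
  obtain ⟨aψ, bψ, hψab⟩ := haffψ
  have hbψ : bψ = -1 := by
    have := hψab 0 ⟨le_refl _, by norm_num⟩
    rw [hψ0] at this; linarith
  have haψ : aψ < 2 := by
    have := hψab (1/2) ⟨by norm_num, le_refl _⟩
    rw [hbψ] at this; rw [this] at hψhalf; linarith
  have hψle : ∀ u ∈ Icc (0:ℝ) (1/2:ℝ), ψ u ≤ 2*u - 1 := by
    intro u hu
    rw [hψab u hu, hbψ]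
    nlinarith [hu.1, hu.2]
  have hkey : ∀ u ∈ Icc (0:ℝ) (1/2:ℝ), 1 - 2*u ≤ φ u - ψ u := by
    intro u hu
    rcases le_or_gt u u₀ with h | h
    · have := hφ0 u ⟨hu.1, h⟩
      rw [this]
      linarith [hψle u hu]
    · have hu₀half : u₀ < 1/2 := lt_of_lt_of_le h hu.2
      obtain ⟨a, b, hφab⟩ := haffφ hu₀half
      have e0 : a * u₀ + b = 0 := by
        rw [← hφab u₀ ⟨le_refl _, hu₀half.le⟩]
        exact hφ0 u₀ ⟨hu₀pos.le, le_refl _⟩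
      have ehalf : aψ * (1/2) + bψ ≤ a * (1/2) + b := by
        rw [← hφab (1/2) ⟨hu₀half.le, le_refl _⟩, ← hψab (1/2) ⟨by norm_num, le_refl _⟩]
        exact hge (1/2) ⟨by norm_num, by norm_num⟩
      have haψu₀ : aψ * u₀ ≤ 2 * u₀ := by nlinarith [hu₀pos]
      rw [hφab u ⟨h.le, hu.2⟩, hψab u hu, hbψ]
      rw [hbψ] at ehalf
      -- need : 1 - 2u ≤ (a*u+b) - (aψ*u - 1), i.e. (a - aψ + 2)*u + b ≥ 0
      have h1 : (a - aψ + 2) * u₀ + b ≥ 0 := by nlinarith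
      have h2 : (a - aψ + 2) * (1/2) + b ≥ 0 := by nlinarith
      rcases le_or_gt 0 (a - aψ + 2) with hA | hA
      · nlinarith [mul_le_mul_of_nonneg_left h.le hA]
      · nlinarith [mul_le_mul_of_nonpos_left hu.2 hA.le]
  -- J := ∫₀¹ W (φ - ψ)
  have hWeq : ∀ u : ℝ, (4/(1-u)^3) * (φ u - c) - (4/(1-u)^3) * (ψ u - c)
      = (4/(1-u)^3) * (φ u - ψ u) := fun u => by ring
  have hJint : IntervalIntegrable (fun u => (4/(1-u)^3) * (φ u - ψ u)) volume 0 1 :=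
    (Iφint.sub Iψint).congr_ae (Filter.Eventually.of_forall (fun u => hWeq u))
  have hJ : (∫ u in (0:ℝ)..1, (4/(1-u)^3) * (φ u - ψ u))
      = (∫ u in (0:ℝ)..1, (4/(1-u)^3) * (φ u - c)) - (∫ u in (0:ℝ)..1, (4/(1-u)^3) * (ψ u - c)) := by
    rw [← intervalIntegral.integral_sub Iφint Iψint]
    exact intervalIntegral.integral_congr (fun u _ => (hWeq u).symm)
  -- split at 1/2
  have hJint1 : IntervalIntegrable (fun u => (4/(1-u)^3) * (φ u - ψ u)) volume 0 (1/2) :=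
    hJint.mono_set (by rw [uIcc_of_le (by norm_num : (0:ℝ) ≤ 1/2), uIcc_of_le (by norm_num : (0:ℝ) ≤ 1)]; exact Icc_subset_Icc (le_refl _) (by norm_num))
  have hJint2 : IntervalIntegrable (fun u => (4/(1-u)^3) * (φ u - ψ u)) volume (1/2) 1 :=
    hJint.mono_set (by rw [uIcc_of_le (by norm_num : (1/2:ℝ) ≤ 1), uIcc_of_le (by norm_num : (0:ℝ) ≤ 1)]; exact Icc_subset_Icc (by norm_num) (le_refl _))
  have hsplit : (∫ u in (0:ℝ)..1, (4/(1-u)^3) * (φ u - ψ u))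
      = (∫ u in (0:ℝ)..(1/2:ℝ), (4/(1-u)^3) * (φ u - ψ u))
        + (∫ u in (1/2:ℝ)..1, (4/(1-u)^3) * (φ u - ψ u)) :=
    (intervalIntegral.integral_add_adjacent_intervals hJint1 hJint2).symm
  have h2nonneg : 0 ≤ ∫ u in (1/2:ℝ)..1, (4/(1-u)^3) * (φ u - ψ u) := by
    apply intervalIntegral.integral_nonneg (by norm_num)
    intro u hu
    apply mul_nonneg
    · apply div_nonneg (by norm_num)
      have : (0:ℝ) ≤ 1 - u := by linarith [hu.2]
      positivity
    · have := hge u ⟨by linarith [hu.1], hu.2⟩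
      linarith
  have hWcont : IntervalIntegrable (fun u : ℝ => (4/(1-u)^3) * (1-2*u)) volume 0 (1/2) := by
    apply ContinuousOn.intervalIntegrable
    apply ContinuousOn.mul
    · apply ContinuousOn.div continuousOn_const (by fun_prop)
      intro x hx
      rw [uIcc_of_le (by norm_num : (0:ℝ) ≤ 1/2)] at hx
      have : (1:ℝ) - x ≠ 0 := by intro h; nlinarith [hx.1, hx.2]
      positivity
    · fun_prop
  have h1ge : (∫ u in (0:ℝ)..(1/2:ℝ), (4/(1-u)^3) * (1-2*u))
      ≤ ∫ u in (0:ℝ)..(1/2:ℝ), (4/(1-u)^3) * (φ u - ψ u) := by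
    apply intervalIntegral.integral_mono_on (by norm_num) hWcont hJint1
    intro x hx
    apply mul_le_mul_of_nonneg_left (hkey x hx)
    apply div_nonneg (by norm_num)
    have : (0:ℝ) ≤ 1 - x := by linarith [hx.2]
    positivity
  rw [computeC] at h1ge
  -- assemble
  have hJge : (∫ u in (0:ℝ)..1, (4/(1-u)^3) * (φ u - ψ u)) ≥ 2 := by
    rw [hsplit]; linarith
  rw [hJ] at hJge
  rw [hψ0] at hψeq
  rw [hφ00] at hφeq
  linarith
end
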